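/- arXiv:2106.11191 — 2 statements merged into one kernel-verified Lean document; each statement's English description precedes it below -/
import Mathlib

section
/- Let S and T be nonempty strings over the same alphabet. If the infinite periodic sequences S^ω and T^ω are equal, then root(S) = root(T). -/
/-- `listPow S k` is the `k`-fold concatenation `S^k` of the string `S`. -/
def listPow {α : Type*} (S : List α) : ℕ → List α
  | 0 => []
  | n + 1 => S ++ listPow S n

/-- A string is primitive if `S = R^k` implies `S = R` and `k = 1`. -/
def IsPrimitiveStr {α : Type*} (S : List α) : Prop :=
  S ≠ [] ∧ ∀ (R : List α) (k : ℕ), S = listPow R k → S = R ∧ k = 1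

/-- The length of the primitive root of `S`: the least positive `d` such that
`S` is the `(|S|/d)`-th power of its length-`d` prefix. -/
noncomputable def rootLen {α : Type*} (S : List α) : ℕ :=
  sInf {d | 0 < d ∧ listPow (S.take d) (S.length / d) = S}

/-- The primitive root of a (nonempty) string `S`. -/
noncomputable def listRoot {α : Type*} (S : List α) : List α := S.take (rootLen S)

/-- `omegaSeq S hS` is the infinite sequence `S^ω` obtained by repeating the
nonempty string `S` forever; `omegaSeq S hS n = S[(n mod |S|) + 1]` (1-based). -/
def omegaSeq {α : Type*} (S : List α) (hS : S ≠ []) (n : ℕ) : α :=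
  S.get ⟨n % S.length, Nat.mod_lt n (List.length_pos_iff.mpr hS)⟩

/-- Lexicographic order on infinite sequences: they differ somewhere and at the
first differing position the left one is smaller. -/
def SeqLexLt {α : Type*} [LinearOrder α] (f g : ℕ → α) : Prop :=
  ∃ n, (∀ m, m < n → f m = g m) ∧ f n < g n

/-- The ω-order on nonempty strings: `S ≺_ω T` iff either `root S = root T` and
`|S| < |T|`, or `S^ω <_lex T^ω`. -/
def OmegaLt {α : Type*} [LinearOrder α] (S T : List α) : Prop :=
  ∃ (hS : S ≠ []) (hT : T ≠ []),
    (listRoot S = listRoot T ∧ S.length < T.length) ∨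
      SeqLexLt (omegaSeq S hS) (omegaSeq T hT)

/-- `conj T i = T[i..n]T[1..i-1]`, the `i`-th rotation (conjugate) of `T`
(1-based index, taken cyclically). -/
def conj {α : Type*} (T : List α) (i : ℕ) : List α := T.rotate (i - 1)

theorem conj_ne_nil {α : Type*} {T : List α} (hT : T ≠ []) (i : ℕ) : conj T i ≠ [] := by
  intro h
  apply hT
  have h' := congrArg List.length h
  simp only [conj, List.length_rotate, List.length_nil] at h'
  exact List.length_eq_zero_iff.mp h'

theorem listPow_ne_nil {α : Type*} {S : List α} (hS : S ≠ []) {r : ℕ} (hr : 1 ≤ r) :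
    listPow S r ≠ [] := by
  cases r with
  | zero => omega
  | succ n =>
    intro h
    exact hS (List.append_eq_nil_iff.mp h).1

/-- Lexicographic order on finite strings. -/
def LexLt {α : Type*} [LinearOrder α] (U V : List α) : Prop := List.Lex (· < ·) U V

/-- Position `i` of `T` is cyclic S-type if `conj_i(T) <_lex conj_{i+1}(T)`. -/
def SType {α : Type*} [LinearOrder α] (T : List α) (i : ℕ) : Prop :=
  LexLt (conj T i) (conj T (i + 1))

/-- Position `i` of `T` is cyclic L-type if `conj_i(T) >_lex conj_{i+1}(T)`. -/
def LType {α : Type*} [LinearOrder α] (T : List α) (i : ℕ) : Prop :=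
  LexLt (conj T (i + 1)) (conj T i)

/-- `cyc T hT i` is the character `T[i]`, 1-based and taken cyclically. -/
def cyc {α : Type*} (T : List α) (hT : T ≠ []) (i : ℕ) : α := omegaSeq T hT (i - 1)

/-- A cyclic S-type position `i` is LMS if position `i-1` (cyclically, so
position `0` means `n`) is cyclic L-type. -/
def IsLMS {α : Type*} [LinearOrder α] (T : List α) (i : ℕ) : Prop :=
  SType T i ∧ LType T (if i = 1 then T.length else i - 1)

/-- The cyclic distance from position `i` to the first LMS position of `T`
strictly after `i` (in cyclic order). -/
noncomputable def lmsDist {α : Type*} [LinearOrder α] (T : List α) (i : ℕ) : ℕ :=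
  sInf {m | 0 < m ∧ IsLMS T ((i + m - 1) % T.length + 1)}

/-- The LMS-prefix of `conj_i(T)`: the cyclic factor of `T` from position `i`
to the first LMS position strictly after `i`, inclusive at both ends. -/
noncomputable def lmsPrefix {α : Type*} [LinearOrder α] (T : List α) (i : ℕ) : List α :=
  (conj T i ++ conj T i).take (lmsDist T i + 1)

/-- The LMS-order: `U <_LMS V` iff `V` is a proper prefix of `U`, or neither is
a prefix of the other and `U <_lex V`. -/
def LMSLt {α : Type*} [LinearOrder α] (U V : List α) : Prop :=
  (V <+: U ∧ V ≠ U) ∨ (¬ U <+: V ∧ ¬ V <+: U ∧ LexLt U V)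

section Aux

variable {α : Type*}

/-- `d` is a period of the infinite sequence `f`. -/
def SeqPeriod (f : ℕ → α) (d : ℕ) : Prop := ∀ n, f (n + d) = f n

theorem seqPeriod_mul {f : ℕ → α} {d : ℕ} (h : SeqPeriod f d) (q : ℕ) :
    SeqPeriod f (d * q) := by
  induction q with
  | zero => intro n; simp
  | succ k ih =>
    intro n
    have : n + d * (k + 1) = (n + d * k) + d := by ring
    rw [this, h, ih]

theorem seqPeriod_mod {f : ℕ → α} {a b : ℕ} (ha : SeqPeriod f a) (hb : SeqPeriod f b) :
    SeqPeriod f (a % b) := by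
  intro n
  have : n + a = (n + a % b) + b * (a / b) := by
    have := Nat.mod_add_div a b; omega
  have h1 := ha n
  rw [this, seqPeriod_mul hb (a / b)] at h1
  exact h1

theorem seqPeriod_gcd {f : ℕ → α} {a b : ℕ} (ha : SeqPeriod f a) (hb : SeqPeriod f b) :
    SeqPeriod f (Nat.gcd a b) := by
  induction a, b using Nat.gcd.induction with
  | H0 n => simpa using hb
  | H1 m n hm ih =>
    rw [Nat.gcd_rec]
    exact ih (seqPeriod_mod hb ha) ha

theorem listPow_length (S : List α) (k : ℕ) : (listPow S k).length = k * S.length := by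
  induction k with
  | zero => simp [listPow]
  | succ n ih => simp [listPow, ih]; ring

theorem getElem_listPow (R : List α) (k m : ℕ) (hm : m < (listPow R k).length)
    (hR : R ≠ []) :
    (listPow R k)[m] = R[m % R.length]'(Nat.mod_lt _ (List.length_pos_iff.mpr hR)) := by
  induction k generalizing m with
  | zero => simp [listPow] at hm
  | succ n ih =>
    have hm' : m < (R ++ listPow R n).length := hm
    show (R ++ listPow R n)[m]'hm' = _
    by_cases h : m < R.length
    · rw [List.getElem_append_left h]
      congr 1
      exact (Nat.mod_eq_of_lt h).symm
    · push_neg at h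
      have hm2 : m - R.length < (listPow R n).length := by
        simp at hm'; omega
      rw [List.getElem_append_right h]
      rw [ih (m - R.length) hm2]
      congr 1
      conv_rhs => rw [show m = (m - R.length) + R.length by omega]
      rw [Nat.add_mod_right]

theorem omegaSeq_eq_get (S : List α) (hS : S ≠ []) (n : ℕ) :
    omegaSeq S hS n = S[n % S.length]'(Nat.mod_lt n (List.length_pos_iff.mpr hS)) := rfl

theorem seqPeriod_omegaSeq_len (S : List α) (hS : S ≠ []) :
    SeqPeriod (omegaSeq S hS) S.length := by
  intro n
  simp [omegaSeq_eq_get, Nat.add_mod_right]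

/-- Membership in the `rootLen` set implies divisibility. -/
theorem dvd_of_mem_rootSet {S : List α} {d : ℕ} (hd : 0 < d)
    (hpow : listPow (S.take d) (S.length / d) = S) (hS : S ≠ []) : d ∣ S.length := by
  have hlen := congrArg List.length hpow
  rw [listPow_length] at hlen
  simp at hlen
  have hSpos : 0 < S.length := List.length_pos_iff.mpr hS
  by_cases h : d ≤ S.length
  · rw [min_eq_left h] at hlen
    exact Dvd.intro_left _ hlen
  · push_neg at h
    have : S.length / d = 0 := Nat.div_eq_of_lt h
    rw [this] at hlen
    omega

theorem seqPeriod_of_mem_rootSet {S : List α} {d : ℕ} (hd : 0 < d)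
    (hpow : listPow (S.take d) (S.length / d) = S) (hS : S ≠ []) :
    SeqPeriod (omegaSeq S hS) d := by
  have hdvd := dvd_of_mem_rootSet hd hpow hS
  have hSpos : 0 < S.length := List.length_pos_iff.mpr hS
  have hle : d ≤ S.length := Nat.le_of_dvd hSpos hdvd
  set R := S.take d with hR
  have hRlen : R.length = d := by simp [hR, min_eq_left hle]
  have hRne : R ≠ [] := by
    intro h; rw [h] at hRlen; simp at hRlen; omega
  intro n
  rw [omegaSeq_eq_get, omegaSeq_eq_get,
    List.getElem_of_eq hpow.symm, List.getElem_of_eq hpow.symm,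
    getElem_listPow _ _ _ _ hRne, getElem_listPow _ _ _ _ hRne]
  congr 1
  rw [hRlen, Nat.mod_mod_of_dvd _ hdvd, Nat.mod_mod_of_dvd _ hdvd, Nat.add_mod_right]

theorem getElem_idx_congr {l : List α} {i j : ℕ} (h : i = j) (hi : i < l.length) :
    l[i] = l[j]'(h ▸ hi) := by subst h; rfl

theorem mem_rootSet_of_seqPeriod {S : List α} {d : ℕ} (hd : 0 < d) (hdvd : d ∣ S.length)
    (hS : S ≠ []) (hper : SeqPeriod (omegaSeq S hS) d) :
    listPow (S.take d) (S.length / d) = S := by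
  have hSpos : 0 < S.length := List.length_pos_iff.mpr hS
  have hle : d ≤ S.length := Nat.le_of_dvd hSpos hdvd
  set R := S.take d with hR
  have hRlen : R.length = d := by simp [hR, min_eq_left hle]
  have hRne : R ≠ [] := by
    intro h; rw [h] at hRlen; simp at hRlen; omega
  have hlen : (listPow R (S.length / d)).length = S.length := by
    rw [listPow_length, hRlen, Nat.div_mul_cancel hdvd]
  apply List.ext_getElem hlen
  intro m hm1 hm2
  rw [getElem_listPow _ _ _ hm1 hRne]
  have hidx : m % R.length = m % d := by rw [hRlen]
  rw [getElem_idx_congr hidx]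
  have hmd : m % d < d := Nat.mod_lt _ hd
  have hRget : R[m % d]'(by omega) = S[m % d]'(by omega) := by
    simp [hR]
  rw [hRget]
  -- S[m % d] = omegaSeq S hS (m % d) = omegaSeq S hS m = S[m]
  have e1 : S[m % d]'(by omega) = omegaSeq S hS (m % d) := by
    rw [omegaSeq_eq_get]
    congr 1
    exact (Nat.mod_eq_of_lt (by omega)).symm
  have e2 : S[m]'hm2 = omegaSeq S hS m := by
    rw [omegaSeq_eq_get]
    congr 1
    exact (Nat.mod_eq_of_lt hm2).symm
  rw [e1, e2]
  have hper' : omegaSeq S hS (m % d + d * (m / d)) = omegaSeq S hS (m % d) :=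
    seqPeriod_mul hper (m / d) (m % d)
  rw [Nat.mod_add_div m d] at hper'
  rw [hper']

/-- `rootLen S` equals the least positive period of `S^ω`. -/
theorem rootLen_eq_sInf_period (S : List α) (hS : S ≠ []) :
    rootLen S = sInf {d | 0 < d ∧ SeqPeriod (omegaSeq S hS) d} := by
  have hSpos : 0 < S.length := List.length_pos_iff.mpr hS
  set A := {d | 0 < d ∧ listPow (S.take d) (S.length / d) = S} with hA
  set B := {d | 0 < d ∧ SeqPeriod (omegaSeq S hS) d} with hB
  have hlenA : S.length ∈ A := by
    refine ⟨hSpos, ?_⟩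
    rw [Nat.div_self hSpos, List.take_length]
    show S ++ listPow S 0 = S
    simp [listPow]
  have hAB : A ⊆ B := by
    rintro d ⟨hd, hpow⟩
    exact ⟨hd, seqPeriod_of_mem_rootSet hd hpow hS⟩
  have hBne : B.Nonempty := ⟨S.length, hAB hlenA⟩
  have hpB : sInf B ∈ B := Nat.sInf_mem hBne
  obtain ⟨hppos, hper⟩ := hpB
  -- sInf B divides S.length
  have hgcd : Nat.gcd (sInf B) S.length ∈ B := by
    refine ⟨Nat.gcd_pos_of_pos_left _ hppos, ?_⟩
    exact seqPeriod_gcd hper (seqPeriod_omegaSeq_len S hS)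
  have hle1 : sInf B ≤ Nat.gcd (sInf B) S.length := Nat.sInf_le hgcd
  have hle2 : Nat.gcd (sInf B) S.length ≤ sInf B := Nat.gcd_le_left _ hppos
  have hgeq : Nat.gcd (sInf B) S.length = sInf B := le_antisymm hle2 hle1
  have hdvd : sInf B ∣ S.length := hgeq ▸ Nat.gcd_dvd_right _ _
  have hpA : sInf B ∈ A := ⟨hppos, mem_rootSet_of_seqPeriod hppos hdvd hS hper⟩
  have h1 : rootLen S ≤ sInf B := Nat.sInf_le hpA
  have h2 : sInf B ≤ rootLen S := Nat.sInf_le (hAB (Nat.sInf_mem ⟨S.length, hlenA⟩))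
  omega

end Aux

/-- If the infinite periodic sequences `S^ω` and `T^ω` of two
nonempty strings are equal, then `root(S) = root(T)`. -/
theorem root_eq_of_omegaSeq_eq {α : Type*} (S T : List α) (hS : S ≠ []) (hT : T ≠ [])
    (h : omegaSeq S hS = omegaSeq T hT) : listRoot S = listRoot T := by
  have hroot : rootLen S = rootLen T := by
    rw [rootLen_eq_sInf_period S hS, rootLen_eq_sInf_period T hT, h]
  set r := rootLen S with hr
  -- r is in the root set of S, hence r ≤ S.length; similarly for T
  have hSpos : 0 < S.length := List.length_pos_iff.mpr hS
  have hTpos : 0 < T.length := List.length_pos_iff.mpr hT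
  have hAS : r ∈ {d | 0 < d ∧ listPow (S.take d) (S.length / d) = S} := by
    apply Nat.sInf_mem
    refine ⟨S.length, hSpos, ?_⟩
    rw [Nat.div_self hSpos, List.take_length]
    show S ++ listPow S 0 = S
    simp [listPow]
  have hAT : rootLen T ∈ {d | 0 < d ∧ listPow (T.take d) (T.length / d) = T} := by
    apply Nat.sInf_mem
    refine ⟨T.length, hTpos, ?_⟩
    rw [Nat.div_self hTpos, List.take_length]
    show T ++ listPow T 0 = T
    simp [listPow]
  have hrS : r ≤ S.length := Nat.le_of_dvd hSpos (dvd_of_mem_rootSet hAS.1 hAS.2 hS)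
  have hrT : r ≤ T.length := by
    rw [hroot]
    exact Nat.le_of_dvd hTpos (dvd_of_mem_rootSet hAT.1 hAT.2 hT)
  unfold listRoot
  rw [← hroot]
  apply List.ext_getElem
  · simp [min_eq_left hrS, min_eq_left hrT]; omega
  · intro i hi1 hi2
    simp only [List.getElem_take]
    have hiS : i < S.length := by simp at hi1; omega
    have e1 : S[i]'hiS = omegaSeq S hS i := by
      rw [omegaSeq_eq_get]; congr 1; exact (Nat.mod_eq_of_lt hiS).symm
    have hiT : i < T.length := by simp at hi2; omega
    have e2 : T[i]'hiT = omegaSeq T hT i := by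
      rw [omegaSeq_eq_get]; congr 1; exact (Nat.mod_eq_of_lt hiT).symm
    rw [e1, e2, h]
end

section
/- Let T be a primitive string of length n ≥ 2, viewed cyclically, and let 1 ≤ i ≤ n. If T[i] is the smallest character occurring in T, then position i is cyclic S-type; if T[i] is the largest character occurring in T, then position i is cyclic L-type. -/
lemma lex_min {α : Type*} [LinearOrder α] (c : α) : ∀ (W : List α), (∀ a ∈ W, c ≤ a) →
    c :: W = W ++ [c] ∨ List.Lex (· < ·) (c :: W) (W ++ [c])
  | [], _ => Or.inl rfl
  | a :: W', h => by
    rcases lt_or_eq_of_le (h a (by simp)) with hlt | heq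
    · exact Or.inr (List.Lex.rel hlt)
    · subst heq
      rcases lex_min c W' (fun x hx => h x (by simp [hx])) with h' | h'
      · exact Or.inl (by simpa using congrArg (c :: ·) h')
      · exact Or.inr (List.Lex.cons h')

lemma lex_max {α : Type*} [LinearOrder α] (c : α) : ∀ (W : List α), (∀ a ∈ W, a ≤ c) →
    W ++ [c] = c :: W ∨ List.Lex (· < ·) (W ++ [c]) (c :: W)
  | [], _ => Or.inl rfl
  | a :: W', h => by
    rcases lt_or_eq_of_le (h a (by simp)) with hlt | heq
    · exact Or.inr (List.Lex.rel hlt)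
    · subst heq
      rcases lex_max a W' (fun x hx => h x (by simp [hx])) with h' | h'
      · exact Or.inl (by simpa using congrArg (a :: ·) h')
      · exact Or.inr (List.Lex.cons h')

lemma listPow_singleton {α : Type*} (a : α) : ∀ n, listPow [a] n = List.replicate n a
  | 0 => rfl
  | n + 1 => by simp [listPow, listPow_singleton a n, List.replicate_succ]

theorem type_of_extremal_char {α : Type*} [LinearOrder α] (T : List α)
    (hT : IsPrimitiveStr T) (h2 : 2 ≤ T.length)
    (i : ℕ) (hi1 : 1 ≤ i) (hi2 : i ≤ T.length) :
    ((∀ c ∈ T, cyc T hT.1 i ≤ c) → SType T i) ∧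
    ((∀ c ∈ T, c ≤ cyc T hT.1 i) → LType T i) := by
  have hTne := hT.1
  have hnpos : 0 < T.length := by omega
  have hne : conj T i ≠ [] := conj_ne_nil hTne i
  obtain ⟨c, W, hU⟩ := List.exists_cons_of_ne_nil hne
  have hc : cyc T hTne i = c := by
    have hlen : 0 < (T.rotate (i - 1)).length := by simp [hnpos]
    have h0 := List.get_rotate T (i - 1) ⟨0, hlen⟩
    have h1 := List.get_of_eq hU ⟨0, hlen⟩
    simp only [conj] at h1
    rw [h0] at h1
    simpa [cyc, omegaSeq] using h1
  have hnext : conj T (i + 1) = W ++ [c] := by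
    have h1 : i + 1 - 1 = (i - 1) + 1 := by omega
    rw [conj, h1, ← List.rotate_rotate]
    have : T.rotate (i - 1) = c :: W := hU
    rw [this, List.rotate_cons_succ, List.rotate_zero]
  have hmem : ∀ a ∈ W, a ∈ T := by
    intro a ha
    have : a ∈ conj T i := by rw [hU]; exact List.mem_cons_of_mem _ ha
    rwa [conj, List.mem_rotate] at this
  have hcT : c ∈ T := by
    have : c ∈ conj T i := by rw [hU]; exact List.mem_cons_self
    rwa [conj, List.mem_rotate] at this
  have hnoteq : c :: W ≠ W ++ [c] := by
    intro heq
    haveI : Nonempty α := ⟨c⟩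
    have hrot : (T.rotate (i - 1)).rotate 1 = T.rotate (i - 1) := by
      rw [show (T.rotate (i-1) : List α) = c :: W from hU,
        List.rotate_cons_succ, List.rotate_zero, ← heq]
    obtain ⟨a, hrep⟩ := List.rotate_one_eq_self_iff_eq_replicate.mp hrot
    have hTall : ∀ x ∈ T, x = a := by
      intro x hx
      have : x ∈ T.rotate (i - 1) := (List.mem_rotate).mpr hx
      rw [hrep] at this
      exact List.eq_of_mem_replicate this
    have hTrep : T = List.replicate T.length a := List.eq_replicate_iff.mpr ⟨rfl, hTall⟩
    have : T = listPow [a] T.length := by rw [listPow_singleton]; exact hTrep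
    have := hT.2 [a] T.length this
    have : T.length = 1 := by rw [this.1]; rfl
    omega
  constructor
  · intro h
    have hW : ∀ a ∈ W, c ≤ a := fun a ha => hc ▸ h a (hmem a ha)
    rcases lex_min c W hW with heq | hlt
    · exact absurd heq hnoteq
    · show LexLt (conj T i) (conj T (i + 1))
      rw [hU, hnext]
      exact hlt
  · intro h
    have hW : ∀ a ∈ W, a ≤ c := fun a ha => hc ▸ h a (hmem a ha)
    rcases lex_max c W hW with heq | hlt
    · exact absurd heq.symm hnoteq
    · show LexLt (conj T (i + 1)) (conj T i)
      rw [hU, hnext]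
      exact hlt
end
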